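/- Under Assumptions 1 and 2, the set where the Lyapunov derivative vanishes is G = {(ω̄, V̄, η̄, φ̄) : ω̄ = 0, V̄ = 0, φ̄ = 0, and η̄ = k·1_n for some k ∈ ℝ}: with P = diag(K^ω(K^V)^{−1}M^{−1}, V^nom·C, I_n, Sᵀ L_φ S) and E = C^{−1}, a vector x = (ω̄, V̄, η̄, φ̄) ∈ ℝ^{3n+(n−1)} satisfies xᵀ(P A + Aᵀ P)x = 0 if and only if ω̄ = 0, V̄ = 0, φ̄ = 0 and η̄ is a scalar multiple of 1_n. -/

import Mathlib

open Matrix Filter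

/-- Index type for the state `(ω̂, V̂, η, φ'')` of dimension `3n + (n-1)`. -/
abbrev Idx (n : ℕ) := (Fin n ⊕ Fin n) ⊕ (Fin n ⊕ Fin (n - 1))

/-- A connected-graph Laplacian: symmetric positive semidefinite, `L 1 = 0`,
and the kernel is exactly the span of the all-ones vector. -/
def IsConnLaplacian {n : ℕ} (L : Matrix (Fin n) (Fin n) ℝ) : Prop :=
  L.PosSemidef ∧ L *ᵥ (fun _ => (1 : ℝ)) = 0 ∧
    ∀ v : Fin n → ℝ, L *ᵥ v = 0 → ∃ c : ℝ, v = fun _ => c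

/-- The closed-loop system matrix `A` of the reduced dynamics
`(ω̂, V̂, η, φ'')`. -/
noncomputable def closedLoopA {n : ℕ}
    (M E Kw KV Kd KdI LR Leta Lphi : Matrix (Fin n) (Fin n) ℝ)
    (S : Matrix (Fin n) (Fin (n - 1)) ℝ) (Vnom γ : ℝ) :
    Matrix (Idx n) (Idx n) ℝ :=
  Matrix.fromBlocks
    (Matrix.fromBlocks
      (-(M * (Kd + Kw))) (M * KV)
      ((1 / Vnom) • (E * Kw)) (-(E * (LR + (1 / Vnom) • KV))))
    (Matrix.fromBlocks
      (-(M * (KV * Kw⁻¹ * KdI))) (-(M * (Lphi * S)))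
      0 ((1 / Vnom) • (E * (Lphi * S))))
    (Matrix.fromBlocks
      KdI 0
      (Sᵀ * KV⁻¹ * Kw) 0)
    (Matrix.fromBlocks
      (-Leta) 0
      0 (-(γ • (1 : Matrix (Fin (n - 1)) (Fin (n - 1)) ℝ))))


/-- The block-diagonal matrix `P = diag(K^ω (K^V)⁻¹ M⁻¹, V^nom C, I, Sᵀ L_φ S)`
of the Lyapunov function `W(x) = ½ xᵀ P x`. -/
noncomputable def lyapP {n : ℕ}
    (M C Kw KV Lphi : Matrix (Fin n) (Fin n) ℝ)
    (S : Matrix (Fin n) (Fin (n - 1)) ℝ) (Vnom : ℝ) :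
    Matrix (Idx n) (Idx n) ℝ :=
  Matrix.fromBlocks
    (Matrix.fromBlocks (Kw * KV⁻¹ * M⁻¹) 0 0 (Vnom • C))
    0 0
    (Matrix.fromBlocks 1 0 0 (Sᵀ * Lphi * S))

lemma ker_ST {n : ℕ} (hn : 2 ≤ n) (S : Matrix (Fin n) (Fin (n-1)) ℝ)
    (hS : Sᵀ * S = 1) (hS1 : Sᵀ *ᵥ (fun _ => (1:ℝ)) = 0) :
    ∀ z : Fin n → ℝ, Sᵀ *ᵥ z = 0 → ∃ c : ℝ, z = fun _ => c := by
  intro z hz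
  set f := Matrix.mulVecLin Sᵀ with hf
  have hsurj : Function.Surjective f := by
    intro v
    refine ⟨S *ᵥ v, ?_⟩
    simp only [hf, Matrix.mulVecLin_apply]
    rw [Matrix.mulVec_mulVec, hS, Matrix.one_mulVec]
  have hrange : LinearMap.range f = ⊤ := LinearMap.range_eq_top.mpr hsurj
  have hrank := LinearMap.finrank_range_add_finrank_ker f
  rw [hrange] at hrank
  simp only [finrank_top, Module.finrank_pi, Fintype.card_fin] at hrank
  have hker1 : Module.finrank ℝ (LinearMap.ker f) = 1 := by omega
  have hone : (fun _ => (1:ℝ)) ∈ LinearMap.ker f := by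
    simp only [hf, LinearMap.mem_ker, Matrix.mulVecLin_apply]
    exact hS1
  have hle : (ℝ ∙ (fun _ => (1:ℝ) : Fin n → ℝ)) ≤ LinearMap.ker f := by
    rw [Submodule.span_singleton_le_iff_mem]; exact hone
  have hne : (fun _ => (1:ℝ) : Fin n → ℝ) ≠ 0 := by
    intro h
    have := congrFun h ⟨0, by omega⟩
    simp at this
  have hspan : (ℝ ∙ (fun _ => (1:ℝ) : Fin n → ℝ)) = LinearMap.ker f := by
    apply Submodule.eq_of_le_of_finrank_eq hle
    rw [hker1, finrank_span_singleton hne]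
  have hzmem : z ∈ (ℝ ∙ (fun _ => (1:ℝ) : Fin n → ℝ)) := by
    rw [hspan]
    simp only [hf, LinearMap.mem_ker, Matrix.mulVecLin_apply]
    exact hz
  obtain ⟨c, hc⟩ := Submodule.mem_span_singleton.mp hzmem
  exact ⟨c, by rw [← hc]; funext i; simp⟩

lemma symm_eq {n : ℕ} {L : Matrix (Fin n) (Fin n) ℝ} (h : L.IsHermitian) : Lᵀ = L := by
  ext i j
  have h2 := congrFun (congrFun h i) j
  simp only [Matrix.conjTranspose_apply, star_trivial] at h2
  simpa [Matrix.transpose_apply] using h2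

lemma symm_dot {n : ℕ} {L : Matrix (Fin n) (Fin n) ℝ} (h : Lᵀ = L) (a b : Fin n → ℝ) :
    a ⬝ᵥ (L *ᵥ b) = b ⬝ᵥ (L *ᵥ a) := by
  rw [Matrix.dotProduct_mulVec, ← Matrix.mulVec_transpose, h, dotProduct_comm]

lemma st_dot {n : ℕ} (S : Matrix (Fin n) (Fin (n-1)) ℝ) (a : Fin n → ℝ) (b : Fin (n-1) → ℝ) :
    (Sᵀ *ᵥ a) ⬝ᵥ b = a ⬝ᵥ (S *ᵥ b) := by
  rw [Matrix.mulVec_transpose, ← Matrix.dotProduct_mulVec]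

lemma lap_dot_const {n : ℕ} {L : Matrix (Fin n) (Fin n) ℝ} (hsym : Lᵀ = L)
    (h1 : L *ᵥ (fun _ => (1:ℝ)) = 0) (a : Fin n → ℝ) (c : ℝ) :
    (L *ᵥ a) ⬝ᵥ (fun _ => c) = 0 := by
  have : (fun _ => c : Fin n → ℝ) = c • (fun _ => (1:ℝ)) := by funext i; simp
  rw [this, dotProduct_smul, dotProduct_comm, symm_dot hsym, h1,
    dotProduct_zero, smul_zero]

lemma proj_dot {n : ℕ} (hn : 2 ≤ n) {L : Matrix (Fin n) (Fin n) ℝ} (hsym : Lᵀ = L)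
    (h1 : L *ᵥ (fun _ => (1:ℝ)) = 0)
    (S : Matrix (Fin n) (Fin (n-1)) ℝ)
    (hS : Sᵀ * S = 1) (hS1 : Sᵀ *ᵥ (fun _ => (1:ℝ)) = 0)
    (a b : Fin n → ℝ) :
    (L *ᵥ a) ⬝ᵥ (S *ᵥ (Sᵀ *ᵥ b)) = (L *ᵥ a) ⬝ᵥ b := by
  obtain ⟨c, hc⟩ := ker_ST hn S hS hS1 (S *ᵥ (Sᵀ *ᵥ b) - b) (by
    rw [Matrix.mulVec_sub, Matrix.mulVec_mulVec, hS, Matrix.one_mulVec, sub_self])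
  have hb : S *ᵥ (Sᵀ *ᵥ b) = b + fun _ => c := by
    rw [← hc]; abel
  rw [hb, dotProduct_add, lap_dot_const hsym h1, add_zero]

set_option maxHeartbeats 2000000 in
theorem stmt_5 {n : ℕ} (hn : 2 ≤ n)
    (m c kw kv kd kdi : Fin n → ℝ)
    (hm : ∀ i, 0 < m i) (hc : ∀ i, 0 < c i) (hkw : ∀ i, 0 < kw i)
    (hkv : ∀ i, 0 < kv i) (hkd : ∀ i, 0 < kd i) (hkdi : ∀ i, 0 < kdi i)
    (E : Matrix (Fin n) (Fin n) ℝ) (hE : E = (Matrix.diagonal c)⁻¹)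
    (LR Leta Lphi : Matrix (Fin n) (Fin n) ℝ)
    (hLR : IsConnLaplacian LR) (hLeta : IsConnLaplacian Leta)
    (hLphi : IsConnLaplacian Lphi)
    (S : Matrix (Fin n) (Fin (n - 1)) ℝ)
    (hS : Sᵀ * S = 1) (hS1 : Sᵀ *ᵥ (fun _ => (1 : ℝ)) = 0)
    (Vnom γ kphi : ℝ) (hVnom : 0 < Vnom) (hγ : 0 < γ) (hkphi : 0 < kphi)
    -- Assumption 1
    (hass1 : Lphi = kphi • LR)
    -- Assumption 2
    (hass2 : γ > kphi / (4 * Vnom))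
    (A : Matrix (Idx n) (Idx n) ℝ)
    (hA : A = closedLoopA (Matrix.diagonal m) E
      (Matrix.diagonal kw) (Matrix.diagonal kv) (Matrix.diagonal kd)
      (Matrix.diagonal kdi) LR Leta Lphi S Vnom γ)
    (P : Matrix (Idx n) (Idx n) ℝ)
    (hP : P = lyapP (Matrix.diagonal m) (Matrix.diagonal c)
      (Matrix.diagonal kw) (Matrix.diagonal kv) Lphi S Vnom) :
    -- the Lyapunov derivative vanishes at `x = (ω̄, V̄, η̄, φ̄)` iff
    -- `ω̄ = 0`, `V̄ = 0`, `φ̄ = 0` and `η̄` is a scalar multiple of `1ₙ`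
    ∀ x : Idx n → ℝ,
      x ⬝ᵥ ((P * A + Aᵀ * P) *ᵥ x) = 0 ↔
        ((∀ i, x (Sum.inl (Sum.inl i)) = 0) ∧
         (∀ i, x (Sum.inl (Sum.inr i)) = 0) ∧
         (∀ i, x (Sum.inr (Sum.inr i)) = 0) ∧
         (∃ k : ℝ, ∀ i, x (Sum.inr (Sum.inl i)) = k)) := by
  have hdinv : ∀ (d : Fin n → ℝ), (∀ i, 0 < d i) →
      (Matrix.diagonal d)⁻¹ = Matrix.diagonal (fun i => (d i)⁻¹) := by
    intro d hd
    apply Matrix.inv_eq_right_inv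
    rw [Matrix.diagonal_mul_diagonal]
    rw [show (fun i => d i * (d i)⁻¹) = fun _ => (1:ℝ) from
      funext fun i => mul_inv_cancel₀ (hd i).ne']
    exact Matrix.diagonal_one
  have hkv' := hdinv kv hkv
  have hkw' := hdinv kw hkw
  have hm' := hdinv m hm
  have hc' := hdinv c hc
  have hLRsym : LRᵀ = LR := symm_eq hLR.1.1
  have hLR1 : LR *ᵥ (fun _ => (1:ℝ)) = 0 := hLR.2.1
  have hstar : ∀ (k : ℕ) (v : Fin k → ℝ), star v = v := fun k v => funext fun i => rfl
  -- symmetry of P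
  have hB : (Sᵀ * LR * S)ᵀ = Sᵀ * LR * S := by
    simp [Matrix.transpose_mul, hLRsym, Matrix.mul_assoc]
  have hD1 : Matrix.diagonal kw * Matrix.diagonal (fun i => (kv i)⁻¹) *
      Matrix.diagonal (fun i => (m i)⁻¹) =
      Matrix.diagonal (fun i => kw i * ((kv i)⁻¹ * (m i)⁻¹)) := by
    simp [Matrix.diagonal_mul_diagonal, mul_assoc]
  have hPsym : Pᵀ = P := by
    rw [hP, hass1]
    unfold lyapP
    rw [hkv', hm', hD1]
    simp [Matrix.fromBlocks_transpose, Matrix.transpose_smul, hB]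
  have step1 : ∀ (y : Idx n → ℝ),
      y ⬝ᵥ ((P * A + Aᵀ * P) *ᵥ y) = 2 * ((P *ᵥ y) ⬝ᵥ (A *ᵥ y)) := by
    intro y
    rw [Matrix.add_mulVec, dotProduct_add, ← Matrix.mulVec_mulVec,
      ← Matrix.mulVec_mulVec]
    have h1 : y ᵥ* P = P *ᵥ y := by
      nth_rewrite 1 [← hPsym]
      rw [Matrix.vecMul_transpose]
    rw [Matrix.dotProduct_mulVec y P, h1, Matrix.dotProduct_mulVec y Aᵀ,
      Matrix.vecMul_transpose, dotProduct_comm (A *ᵥ y)]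
    ring
  have key : ∀ (ω V η : Fin n → ℝ) (φp : Fin (n-1) → ℝ),
      (Sum.elim (Sum.elim ω V) (Sum.elim η φp) : Idx n → ℝ) ⬝ᵥ
        ((P * A + Aᵀ * P) *ᵥ Sum.elim (Sum.elim ω V) (Sum.elim η φp))
      = -2 * ((∑ i, kw i * kd i / kv i * ω i ^ 2)
          + (∑ i, kv i * (kw i / kv i * ω i - V i) ^ 2)
          + η ⬝ᵥ (Leta *ᵥ η)
          + Vnom * ((V - (kphi/(2*Vnom)) • (S *ᵥ φp)) ⬝ᵥ
              (LR *ᵥ (V - (kphi/(2*Vnom)) • (S *ᵥ φp))))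
          + (kphi * (γ - kphi/(4*Vnom))) * ((S *ᵥ φp) ⬝ᵥ (LR *ᵥ (S *ᵥ φp)))) := by
    intro ω V η φp
    have hPx : P *ᵥ (Sum.elim (Sum.elim ω V) (Sum.elim η φp) : Idx n → ℝ) =
        Sum.elim (Sum.elim (fun i => kw i * ((kv i)⁻¹ * ((m i)⁻¹ * ω i)))
            (fun i => Vnom * (c i * V i)))
          (Sum.elim η (kphi • (Sᵀ *ᵥ (LR *ᵥ (S *ᵥ φp))))) := by
      rw [hP, hass1]
      unfold lyapP
      rw [hkv', hm']
      funext s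
      rcases s with (i|i)|(i|i) <;>
        simp [Matrix.fromBlocks_mulVec, ← Matrix.mulVec_mulVec,
          Matrix.mulVec_diagonal, Matrix.smul_mulVec, Matrix.mulVec_smul,
          Matrix.zero_mulVec, Matrix.mulVec_zero, Matrix.one_mulVec] <;>
        try ring
    have hbb : (Matrix.diagonal (fun i => (kv i)⁻¹)) *ᵥ (Matrix.diagonal kw *ᵥ ω) =
        fun i => (kv i)⁻¹ * (kw i * ω i) := by
      funext i; simp [Matrix.mulVec_diagonal]
    have hAx : A *ᵥ (Sum.elim (Sum.elim ω V) (Sum.elim η φp) : Idx n → ℝ) =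
        Sum.elim (Sum.elim
            (fun i => m i * (kv i * V i) - m i * ((kd i + kw i) * ω i)
              - m i * (kv i * ((kw i)⁻¹ * (kdi i * η i)))
              - m i * (kphi * (LR *ᵥ (S *ᵥ φp)) i))
            (fun i => (1/Vnom) * ((c i)⁻¹ * (kw i * ω i))
              - (c i)⁻¹ * ((LR *ᵥ V) i + (1/Vnom) * (kv i * V i))
              + (1/Vnom) * ((c i)⁻¹ * (kphi * (LR *ᵥ (S *ᵥ φp)) i))))
          (Sum.elim
            (fun i => kdi i * ω i - (Leta *ᵥ η) i)
            (Sᵀ *ᵥ (fun i => (kv i)⁻¹ * (kw i * ω i)) - γ • φp)) := by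
      rw [hA, hE, hass1]
      unfold closedLoopA
      rw [hkw', hkv', hc']
      funext s
      rcases s with (i|i)|(i|i) <;>
        simp [Matrix.fromBlocks_mulVec, ← Matrix.mulVec_mulVec, hbb,
          Matrix.mulVec_diagonal, Matrix.smul_mulVec, Matrix.mulVec_smul,
          Matrix.zero_mulVec, Matrix.mulVec_zero, Matrix.one_mulVec,
          Matrix.neg_mulVec, Matrix.add_mulVec] <;>
        ring
    rw [step1, hPx, hAx, sumElim_dotProduct_sumElim,
      sumElim_dotProduct_sumElim, sumElim_dotProduct_sumElim]
    have hd1 : (fun i => kw i * ((kv i)⁻¹ * ((m i)⁻¹ * ω i))) ⬝ᵥ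
        (fun i => m i * (kv i * V i) - m i * ((kd i + kw i) * ω i)
          - m i * (kv i * ((kw i)⁻¹ * (kdi i * η i)))
          - m i * (kphi * (LR *ᵥ (S *ᵥ φp)) i)) =
        -(∑ i, kw i * kd i / kv i * ω i ^ 2)
        - (∑ i, kw i * (kv i)⁻¹ * kw i * ω i ^ 2)
        + (∑ i, kw i * ω i * V i) - (∑ i, kdi i * ω i * η i)
        - kphi * ((LR *ᵥ (S *ᵥ φp)) ⬝ᵥ (fun i => (kv i)⁻¹ * (kw i * ω i))) := by
      simp only [dotProduct, Finset.mul_sum, ← Finset.sum_neg_distrib,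
        ← Finset.sum_sub_distrib, ← Finset.sum_add_distrib]
      apply Finset.sum_congr rfl
      intro i _
      have h1 := (hm i).ne'
      have h2 := (hkv i).ne'
      have h3 := (hkw i).ne'
      field_simp
      ring
    have hd2 : (fun i => Vnom * (c i * V i)) ⬝ᵥ
        (fun i => (1/Vnom) * ((c i)⁻¹ * (kw i * ω i))
          - (c i)⁻¹ * ((LR *ᵥ V) i + (1/Vnom) * (kv i * V i))
          + (1/Vnom) * ((c i)⁻¹ * (kphi * (LR *ᵥ (S *ᵥ φp)) i))) =
        (∑ i, kw i * ω i * V i) - Vnom * (V ⬝ᵥ (LR *ᵥ V))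
        - (∑ i, kv i * V i ^ 2) + kphi * (V ⬝ᵥ (LR *ᵥ (S *ᵥ φp))) := by
      simp only [dotProduct, Finset.mul_sum, ← Finset.sum_neg_distrib,
        ← Finset.sum_sub_distrib, ← Finset.sum_add_distrib]
      apply Finset.sum_congr rfl
      intro i _
      have h1 := (hc i).ne'
      have h2 := hVnom.ne'
      field_simp
      ring
    have hd3 : η ⬝ᵥ (fun i => kdi i * ω i - (Leta *ᵥ η) i) =
        (∑ i, kdi i * ω i * η i) - η ⬝ᵥ (Leta *ᵥ η) := by
      simp only [dotProduct, Finset.mul_sum, ← Finset.sum_neg_distrib,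
        ← Finset.sum_sub_distrib, ← Finset.sum_add_distrib]
      apply Finset.sum_congr rfl
      intro i _
      ring
    have hd4 : (kphi • (Sᵀ *ᵥ (LR *ᵥ (S *ᵥ φp)))) ⬝ᵥ
        (Sᵀ *ᵥ (fun i => (kv i)⁻¹ * (kw i * ω i)) - γ • φp) =
        kphi * ((LR *ᵥ (S *ᵥ φp)) ⬝ᵥ (fun i => (kv i)⁻¹ * (kw i * ω i)))
        - kphi * γ * ((S *ᵥ φp) ⬝ᵥ (LR *ᵥ (S *ᵥ φp))) := by
      rw [smul_dotProduct, dotProduct_sub,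
        st_dot S (LR *ᵥ (S *ᵥ φp)) (Sᵀ *ᵥ (fun i => (kv i)⁻¹ * (kw i * ω i))),
        proj_dot hn hLRsym hLR1 S hS hS1 (S *ᵥ φp) (fun i => (kv i)⁻¹ * (kw i * ω i)),
        dotProduct_smul, st_dot S (LR *ᵥ (S *ᵥ φp)) φp,
        dotProduct_comm (LR *ᵥ (S *ᵥ φp)) (S *ᵥ φp)]
      simp only [smul_eq_mul]
      ring
    rw [hd1, hd2, hd3, hd4]
    have hs2 : (∑ i, kv i * (kw i / kv i * ω i - V i) ^ 2) =
        (∑ i, kw i * (kv i)⁻¹ * kw i * ω i ^ 2) - 2*(∑ i, kw i * ω i * V i)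
        + (∑ i, kv i * V i ^ 2) := by
      simp only [Finset.mul_sum, ← Finset.sum_neg_distrib,
        ← Finset.sum_sub_distrib, ← Finset.sum_add_distrib]
      apply Finset.sum_congr rfl
      intro i _
      have h2 := (hkv i).ne'
      field_simp
      ring
    have hu : (V - (kphi/(2*Vnom)) • (S *ᵥ φp)) ⬝ᵥ
        (LR *ᵥ (V - (kphi/(2*Vnom)) • (S *ᵥ φp))) =
        V ⬝ᵥ (LR *ᵥ V) - (kphi/Vnom) * (V ⬝ᵥ (LR *ᵥ (S *ᵥ φp)))
        + (kphi/(2*Vnom))^2 * ((S *ᵥ φp) ⬝ᵥ (LR *ᵥ (S *ᵥ φp))) := by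
      simp only [Matrix.mulVec_sub, Matrix.mulVec_smul, sub_dotProduct,
        dotProduct_sub, smul_dotProduct, dotProduct_smul,
        smul_eq_mul, symm_dot hLRsym (S *ᵥ φp) V]
      have h2 := hVnom.ne'
      field_simp
      ring
    rw [hs2, hu]
    have h2 := hVnom.ne'
    field_simp
    ring
  intro x
  have hform := key (fun i => x (Sum.inl (Sum.inl i))) (fun i => x (Sum.inl (Sum.inr i)))
    (fun i => x (Sum.inr (Sum.inl i))) (fun i => x (Sum.inr (Sum.inr i)))
  have hx : x = Sum.elim (Sum.elim (fun i => x (Sum.inl (Sum.inl i)))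
      (fun i => x (Sum.inl (Sum.inr i))))
      (Sum.elim (fun i => x (Sum.inr (Sum.inl i))) (fun i => x (Sum.inr (Sum.inr i)))) := by
    funext s; rcases s with (i|i)|(i|i) <;> rfl
  rw [← hx] at hform
  rw [hform]
  set ω := fun i => x (Sum.inl (Sum.inl i)) with hωdef
  set V := fun i => x (Sum.inl (Sum.inr i)) with hVdef
  set η := fun i => x (Sum.inr (Sum.inl i)) with hηdef
  set φp := fun i => x (Sum.inr (Sum.inr i)) with hφdef
  set w := S *ᵥ φp with hwdef
  set u := V - (kphi/(2*Vnom)) • w with hudef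
  set T1 := ∑ i, kw i * kd i / kv i * ω i ^ 2 with hT1
  set T2 := ∑ i, kv i * (kw i / kv i * ω i - V i) ^ 2 with hT2
  set R4 := η ⬝ᵥ (Leta *ᵥ η) with hR4
  set U := u ⬝ᵥ (LR *ᵥ u) with hU
  set R3 := w ⬝ᵥ (LR *ᵥ w) with hR3
  have hCγ : 0 < kphi * (γ - kphi/(4*Vnom)) := by
    apply mul_pos hkphi
    have : kphi / (4 * Vnom) < γ := hass2
    linarith
  constructor
  · intro h
    have hT1nn : 0 ≤ T1 := Finset.sum_nonneg fun i _ =>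
      mul_nonneg (div_nonneg (mul_nonneg (hkw i).le (hkd i).le) (hkv i).le) (sq_nonneg _)
    have hT2nn : 0 ≤ T2 := Finset.sum_nonneg fun i _ =>
      mul_nonneg (hkv i).le (sq_nonneg _)
    have hR4nn : 0 ≤ R4 := by
      have := hLeta.1.dotProduct_mulVec_nonneg η
      rwa [hstar n η] at this
    have hUnn : 0 ≤ U := by
      have := hLR.1.dotProduct_mulVec_nonneg u
      rwa [hstar n u] at this
    have hR3nn : 0 ≤ R3 := by
      have := hLR.1.dotProduct_mulVec_nonneg w
      rwa [hstar n w] at this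
    have hVU : 0 ≤ Vnom * U := mul_nonneg hVnom.le hUnn
    have hCR : 0 ≤ kphi * (γ - kphi/(4*Vnom)) * R3 := mul_nonneg hCγ.le hR3nn
    have hsum0 : T1 + T2 + R4 + Vnom * U + kphi * (γ - kphi/(4*Vnom)) * R3 = 0 := by
      linarith
    have hT1z : T1 = 0 := by linarith
    have hT2z : T2 = 0 := by linarith
    have hR4z : R4 = 0 := by linarith
    have hCRz : kphi * (γ - kphi/(4*Vnom)) * R3 = 0 := by linarith
    have hR3z : R3 = 0 := (mul_eq_zero.mp hCRz).resolve_left hCγ.ne'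
    -- ω = 0
    have hω : ∀ i, ω i = 0 := by
      intro i
      have hterm := (Finset.sum_eq_zero_iff_of_nonneg (fun i _ =>
        mul_nonneg (div_nonneg (mul_nonneg (hkw i).le (hkd i).le) (hkv i).le)
          (sq_nonneg (ω i)))).mp hT1z i (Finset.mem_univ i)
      have hcpos : 0 < kw i * kd i / kv i := div_pos (mul_pos (hkw i) (hkd i)) (hkv i)
      have : ω i ^ 2 = 0 := (mul_eq_zero.mp hterm).resolve_left hcpos.ne'
      exact pow_eq_zero_iff two_ne_zero |>.mp this
    -- V = 0
    have hV : ∀ i, V i = 0 := by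
      intro i
      have hterm := (Finset.sum_eq_zero_iff_of_nonneg (fun i _ =>
        mul_nonneg (hkv i).le (sq_nonneg (kw i / kv i * ω i - V i)))).mp
          hT2z i (Finset.mem_univ i)
      have : (kw i / kv i * ω i - V i) ^ 2 = 0 :=
        (mul_eq_zero.mp hterm).resolve_left (hkv i).ne'
      have h0 : kw i / kv i * ω i - V i = 0 := pow_eq_zero_iff two_ne_zero |>.mp this
      rw [hω i] at h0
      simpa using h0.symm
    -- φ = 0
    have hLRw : LR *ᵥ w = 0 := by
      have := (hLR.1.dotProduct_mulVec_zero_iff w)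
      rw [hstar n w] at this
      exact this.mp hR3z
    obtain ⟨c0, hc0⟩ := hLR.2.2 w hLRw
    have hφ0 : φp = 0 := by
      have h1 : Sᵀ *ᵥ (S *ᵥ φp) = φp := by
        rw [Matrix.mulVec_mulVec, hS, Matrix.one_mulVec]
      rw [← h1, ← hwdef, hc0,
        show (fun _ => c0 : Fin n → ℝ) = c0 • (fun _ => (1:ℝ)) from
          funext fun _ => by simp,
        Matrix.mulVec_smul, hS1, smul_zero]
    -- η constant
    have hLη : Leta *ᵥ η = 0 := by
      have := (hLeta.1.dotProduct_mulVec_zero_iff η)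
      rw [hstar n η] at this
      exact this.mp hR4z
    obtain ⟨k, hk⟩ := hLeta.2.2 η hLη
    exact ⟨hω, hV, fun i => congrFun hφ0 i, ⟨k, fun i => congrFun hk i⟩⟩
  · rintro ⟨hω0, hV0', hφ0', ⟨k, hη0⟩⟩
    have hω : ∀ i, ω i = 0 := hω0
    have hV : ∀ i, V i = 0 := hV0'
    have hφ : ∀ i, φp i = 0 := hφ0'
    have hη : ∀ i, η i = k := hη0
    have hφ0 : φp = 0 := funext fun i => hφ i
    have hw0 : w = 0 := by rw [hwdef, hφ0, Matrix.mulVec_zero]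
    have hV0 : V = 0 := funext fun i => hV i
    have hu0 : u = 0 := by rw [hudef, hw0, hV0, smul_zero, sub_zero]
    have hT1z : T1 = 0 := Finset.sum_eq_zero fun i _ => by rw [hω i]; ring
    have hT2z : T2 = 0 := Finset.sum_eq_zero fun i _ => by rw [hω i, hV i]; ring
    have hR4z : R4 = 0 := by
      have hηk : η = fun _ => k := funext fun i => hη i
      rw [hR4, hηk, show (fun _ => k : Fin n → ℝ) = k • (fun _ => (1:ℝ)) from
        funext fun _ => by simp, Matrix.mulVec_smul, hLeta.2.1, smul_zero,
        dotProduct_zero]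
    have hUz : U = 0 := by rw [hU, hu0, zero_dotProduct]
    have hR3z : R3 = 0 := by rw [hR3, hw0, zero_dotProduct]
    rw [hT1z, hT2z, hR4z, hUz, hR3z]
    ring
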